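/- For any constant ĉ ≥ 3 there exists an absolute constant c_max > 0 with the following property. Let f : ℝ^d → ℝ be twice differentiable with L-Lipschitz gradient and ρ-Lipschitz Hessian, let λ ≥ 0, γ > 0, κ = L/γ, and δ ∈ (0, dκ/e]. Suppose x̃ satisfies ‖L(x̃ − S_{λ/L}(x̃ − (1/L)∇f(x̃)))‖ ≤ 𝒢 and λ_min(∇²f(x̃)) ≤ −γ. Let u_t be the proximal gradient sequence u_{t+1} = S_{ηλ}(u_t − η∇f(u_t)) with initial point u₀ satisfying ‖u₀ − x̃‖ ≤ 2𝒮/(κ·ln(dκ/δ)), and define T = min{ inf{ t : f̃_{u₀}(u_t) − f(u₀) + λ‖u_t‖₁ − λ‖u₀‖₁ ≤ −3𝒻 }, ĉ·𝒯 }. Then for any η ≤ c_max/L and all t < T, ‖u_t − x̃‖ ≤ 100·𝒮·ĉ. -/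

import Mathlib

open scoped RealInnerProductSpace

/-- Soft-thresholding operator `S_c` on `ℝ^d`. -/
noncomputable def soft {d : ℕ} (c : ℝ) (x : EuclideanSpace ℝ (Fin d)) :
    EuclideanSpace ℝ (Fin d) :=
  WithLp.toLp 2 (fun i => Real.sign (x i) * max (|x i| - c) 0)

/-- The `ℓ¹` norm on `ℝ^d`. -/
noncomputable def l1 {d : ℕ} (x : EuclideanSpace ℝ (Fin d)) : ℝ := ∑ i, |x i|

lemma key1d (c w z : ℝ) (hc : 0 ≤ c) :
    c * |Real.sign w * max (|w| - c) 0|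
      + (w - Real.sign w * max (|w| - c) 0) * (z - Real.sign w * max (|w| - c) 0)
      ≤ c * |z| := by
  rcases le_or_gt (|w|) c with h | h
  · rw [max_eq_right (by linarith)]
    simp only [mul_zero, abs_zero, sub_zero]
    nlinarith [abs_mul w z, le_abs_self (w*z), abs_nonneg z, mul_le_mul_of_nonneg_right h (abs_nonneg z)]
  · have hw0 : w ≠ 0 := by intro h0; rw [h0] at h; simp at h; linarith
    rw [max_eq_left (by linarith)]
    rcases lt_or_gt_of_ne hw0 with hneg | hpos
    · rw [Real.sign_of_neg hneg, abs_of_neg hneg] at *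
      have : |(-1 : ℝ) * (-w - c)| = -w - c := by
        rw [abs_of_nonpos (by nlinarith)]; ring
      rw [this]
      nlinarith [neg_abs_le z, abs_nonneg z]
    · rw [Real.sign_of_pos hpos, abs_of_pos hpos] at *
      have : |(1 : ℝ) * (w - c)| = w - c := by
        rw [abs_of_nonneg] <;> linarith
      rw [this]
      nlinarith [le_abs_self z, abs_nonneg z]

lemma soft_apply {d : ℕ} (c : ℝ) (x : EuclideanSpace ℝ (Fin d)) (i : Fin d) :
    soft c x i = Real.sign (x i) * max (|x i| - c) 0 := rfl

lemma soft_prox {d : ℕ} (c : ℝ) (hc : 0 ≤ c) (w z : EuclideanSpace ℝ (Fin d)) :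
    c * l1 (soft c w) + ⟪w - soft c w, z - soft c w⟫ ≤ c * l1 z := by
  simp only [l1, PiLp.inner_apply, RCLike.inner_apply, conj_trivial, Finset.mul_sum]
  rw [← Finset.sum_add_distrib]
  apply Finset.sum_le_sum
  intro i _
  have h := key1d c (w i) (z i) hc
  simp [soft_apply] at h ⊢
  linarith

lemma soft_lip1d (c a b : ℝ) (hc : 0 ≤ c) :
    |Real.sign a * max (|a| - c) 0 - Real.sign b * max (|b| - c) 0| ≤ |a - b| := by
  set sa := Real.sign a * max (|a| - c) 0 with hsa
  set sb := Real.sign b * max (|b| - c) 0 with hsb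
  have h1 := key1d c a sb hc
  have h2 := key1d c b sa hc
  simp only [← hsa, ← hsb] at h1 h2
  have hkey : (sa - sb)^2 ≤ (a - b) * (sa - sb) := by nlinarith
  rcases eq_or_ne sa sb with he | hne
  · simp [he, abs_nonneg]
  · have h3 : |sa - sb| > 0 := abs_pos.mpr (sub_ne_zero.mpr hne)
    have h4 : (a-b) * (sa - sb) ≤ |a-b| * |sa-sb| := by
      rw [← abs_mul]; exact le_abs_self _
    nlinarith [sq_abs (sa - sb)]

lemma soft_lip {d : ℕ} (c : ℝ) (hc : 0 ≤ c) (x y : EuclideanSpace ℝ (Fin d)) :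
    ‖soft c x - soft c y‖ ≤ ‖x - y‖ := by
  rw [EuclideanSpace.norm_eq, EuclideanSpace.norm_eq]
  apply Real.sqrt_le_sqrt
  apply Finset.sum_le_sum
  intro i _
  simp only [PiLp.sub_apply, Real.norm_eq_abs, soft_apply]
  have := soft_lip1d c (x i) (y i) hc
  nlinarith [abs_nonneg (Real.sign (x i) * max (|x i| - c) 0 - Real.sign (y i) * max (|y i| - c) 0), abs_nonneg (x i - y i)]

lemma abs_le_of_mul_aux {c₁ c₂ h₁ h₂ : ℝ} (hc : 0 < c₁) (hcc : c₁ ≤ c₂)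
    (H : (h₁ - h₂) * (c₂ * h₁ - c₁ * h₂) ≤ 0) : |h₁| ≤ |h₂| := by
  rcases abs_cases h₁ with ⟨e1, s1⟩ | ⟨e1, s1⟩ <;> rcases abs_cases h₂ with ⟨e2, s2⟩ | ⟨e2, s2⟩ <;>
    rw [e1, e2] <;> by_contra hcon <;> push_neg at hcon
  · have p1 : 0 < h₁ - h₂ := by linarith
    have p2 : 0 < c₂ * h₁ - c₁ * h₂ := by nlinarith
    nlinarith [mul_pos p1 p2]
  · have p1 : 0 < h₁ - h₂ := by linarith
    have p2 : 0 < c₂ * h₁ - c₁ * h₂ := by nlinarith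
    nlinarith [mul_pos p1 p2]
  · have p1 : 0 < h₂ - h₁ := by linarith
    have p2 : 0 < c₁ * h₂ - c₂ * h₁ := by nlinarith
    nlinarith [mul_pos p1 p2]
  · have p1 : 0 < h₂ - h₁ := by linarith
    have p2 : 0 < c₁ * h₂ - c₂ * h₁ := by nlinarith
    nlinarith [mul_pos p1 p2]

lemma resid_mono1d (lam a g : ℝ) (hlam : 0 ≤ lam) {c₁ c₂ : ℝ} (h1 : 0 < c₁) (h12 : c₁ ≤ c₂) :
    |a - Real.sign (a - c₁ * g) * max (|a - c₁ * g| - c₁ * lam) 0|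
      ≤ |a - Real.sign (a - c₂ * g) * max (|a - c₂ * g| - c₂ * lam) 0| := by
  have h2 : (0:ℝ) < c₂ := lt_of_lt_of_le h1 h12
  set s₁ := Real.sign (a - c₁ * g) * max (|a - c₁ * g| - c₁ * lam) 0 with hs1
  set s₂ := Real.sign (a - c₂ * g) * max (|a - c₂ * g| - c₂ * lam) 0 with hs2
  have k1 := key1d (c₁ * lam) (a - c₁ * g) s₂ (by positivity)
  have k2 := key1d (c₂ * lam) (a - c₂ * g) s₁ (by positivity)
  simp only [← hs1, ← hs2] at k1 k2
  apply abs_le_of_mul_aux h1 h12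
  nlinarith [mul_le_mul_of_nonneg_left k1 h2.le, mul_le_mul_of_nonneg_left k2 h1.le]

/-- The Hessian of `f` at `x`, as the Fréchet derivative of the gradient. -/
noncomputable def hess {d : ℕ} (f : EuclideanSpace ℝ (Fin d) → ℝ)
    (x : EuclideanSpace ℝ (Fin d)) :
    EuclideanSpace ℝ (Fin d) →L[ℝ] EuclideanSpace ℝ (Fin d) :=
  fderiv ℝ (gradient f) x

/-- The quadratic approximation of `f` at `y`, with Hessian taken at `xt`. -/
noncomputable def ftilde {d : ℕ} (f : EuclideanSpace ℝ (Fin d) → ℝ)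
    (xt y x : EuclideanSpace ℝ (Fin d)) : ℝ :=
  f y + ⟪gradient f y, x - y⟫ + (1 / 2) * ⟪x - y, hess f xt (x - y)⟫

section taylor
variable {d : ℕ} {f : EuclideanSpace ℝ (Fin d) → ℝ}

lemma line_hasDerivAt (x v : EuclideanSpace ℝ (Fin d)) (t : ℝ) :
    HasDerivAt (fun s : ℝ => x + s • v) v t := by
  simpa using ((hasDerivAt_id t).smul_const v).const_add x

lemma phi_hasDerivAt (hdf : Differentiable ℝ f) (x v : EuclideanSpace ℝ (Fin d)) (t : ℝ) :
    HasDerivAt (fun s : ℝ => f (x + s • v)) (⟪gradient f (x + t • v), v⟫) t := by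
  have h1 := ((hdf (x + t • v)).hasGradientAt.hasFDerivAt).comp_hasDerivAt t (line_hasDerivAt x v t)
  rw [← InnerProductSpace.toDual_apply_apply]
  exact h1

lemma psi_hasDerivAt (hdg : Differentiable ℝ (gradient f)) (x v : EuclideanSpace ℝ (Fin d)) (t : ℝ) :
    HasDerivAt (fun s : ℝ => ⟪gradient f (x + s • v), v⟫) (⟪hess f (x + t • v) v, v⟫) t := by
  have h1 : HasDerivAt (fun s : ℝ => gradient f (x + s • v)) (hess f (x + t • v) v) t := by
    have := ((hdg (x + t • v)).hasFDerivAt).comp_hasDerivAt t (line_hasDerivAt x v t)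
    exact this
  have h2 := HasDerivAt.inner ℝ h1 (hasDerivAt_const t v)
  simpa using h2

lemma cont_of_lip {E F : Type*} [NormedAddCommGroup E] [NormedAddCommGroup F]
    {g : E → F} {L : ℝ} (h : ∀ x y, ‖g x - g y‖ ≤ L * ‖x - y‖) : Continuous g := by
  rcases le_or_gt L 0 with hL | hL
  · have : ∀ x y, g x = g y := by
      intro x y
      have := h x y
      have h2 : ‖g x - g y‖ ≤ 0 := le_trans this (by nlinarith [norm_nonneg (x - y), mul_nonneg (neg_nonneg.mpr hL) (norm_nonneg (x-y))])
      rw [← sub_eq_zero]; exact norm_le_zero_iff.mp h2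
    have : g = fun _ => g 0 := funext fun x => this x 0
    rw [this]; exact continuous_const
  · have : LipschitzWith L.toNNReal g := by
      apply LipschitzWith.of_dist_le_mul
      intro x y
      rw [dist_eq_norm, dist_eq_norm, Real.coe_toNNReal _ hL.le]
      exact h x y
    exact this.continuous

lemma taylor2 (L : ℝ) (hdf : Differentiable ℝ f)
    (hlip : ∀ x y, ‖gradient f x - gradient f y‖ ≤ L * ‖x - y‖)
    (x y : EuclideanSpace ℝ (Fin d)) :
    f y ≤ f x + ⟪gradient f x, y - x⟫ + L / 2 * ‖y - x‖ ^ 2 := by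
  set v := y - x with hv
  have contg : Continuous (gradient f) := cont_of_lip hlip
  have contline : Continuous fun t : ℝ => x + t • v :=
    continuous_const.add (continuous_id.smul continuous_const)
  have contψ : Continuous fun t : ℝ => ⟪gradient f (x + t • v), v⟫ :=
    (contg.comp contline).inner continuous_const
  have hftc0 : ∫ t in (0:ℝ)..1, ⟪gradient f (x + t • v), v⟫
      = (fun s : ℝ => f (x + s • v)) 1 - (fun s : ℝ => f (x + s • v)) 0 :=
    intervalIntegral.integral_eq_sub_of_hasDerivAt (fun t _ => phi_hasDerivAt hdf x v t)
      (contψ.intervalIntegrable 0 1)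
  have hftc : ∫ t in (0:ℝ)..1, ⟪gradient f (x + t • v), v⟫ = f y - f x := by
    rw [hftc0]; simp [hv]
  have hbound : ∀ t ∈ Set.Icc (0:ℝ) 1,
      ⟪gradient f (x + t • v), v⟫ ≤ ⟪gradient f x, v⟫ + L * t * ‖v‖ ^ 2 := by
    intro t ht
    have h1 : ⟪gradient f (x + t • v) - gradient f x, v⟫ ≤ ‖gradient f (x + t • v) - gradient f x‖ * ‖v‖ :=
      real_inner_le_norm _ _
    have h2 : ‖gradient f (x + t • v) - gradient f x‖ ≤ L * (t * ‖v‖) := by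
      have := hlip (x + t • v) x
      simpa [norm_smul, abs_of_nonneg ht.1] using this
    have h3 := inner_sub_left (𝕜 := ℝ) (gradient f (x + t • v)) (gradient f x) v
    nlinarith [norm_nonneg v]
  have hint : ∫ t in (0:ℝ)..1, ⟪gradient f (x + t • v), v⟫
      ≤ ∫ t in (0:ℝ)..1, (⟪gradient f x, v⟫ + L * t * ‖v‖ ^ 2) := by
    apply intervalIntegral.integral_mono_on zero_le_one
      (contψ.intervalIntegrable 0 1)
      ((Continuous.intervalIntegrable (by fun_prop) 0 1 :
        IntervalIntegrable (fun t : ℝ => ⟪gradient f x, v⟫ + L * t * ‖v‖ ^ 2) MeasureTheory.volume 0 1))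
    exact hbound
  have heval : ∫ t in (0:ℝ)..1, (⟪gradient f x, v⟫ + L * t * ‖v‖ ^ 2)
      = ⟪gradient f x, v⟫ + L / 2 * ‖v‖ ^ 2 := by
    rw [intervalIntegral.integral_add (intervalIntegrable_const)
      ((Continuous.intervalIntegrable (by fun_prop) 0 1 :
        IntervalIntegrable (fun t : ℝ => L * t * ‖v‖ ^ 2) MeasureTheory.volume 0 1))]
    simp only [intervalIntegral.integral_const, smul_eq_mul]
    have : ∫ t in (0:ℝ)..1, L * t * ‖v‖ ^ 2 = L / 2 * ‖v‖ ^ 2 := by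
      have : (fun t : ℝ => L * t * ‖v‖ ^ 2) = fun t : ℝ => (L * ‖v‖ ^ 2) * t := by
        funext t; ring
      rw [this, intervalIntegral.integral_const_mul, integral_id]
      ring
    rw [this]; ring
  rw [hftc] at hint
  rw [heval] at hint
  linarith
end taylor

section taylor3
variable {d : ℕ} {f : EuclideanSpace ℝ (Fin d) → ℝ}

lemma taylor3 (ρ : ℝ) (hρ : 0 ≤ ρ) (hdf : Differentiable ℝ f) (hdg : Differentiable ℝ (gradient f))
    (hlip : ∀ x y, ‖hess f x - hess f y‖ ≤ ρ * ‖x - y‖)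
    (xt y x : EuclideanSpace ℝ (Fin d)) :
    |f x - ftilde f xt y x| ≤ ρ / 2 * (‖y - xt‖ + ‖x - y‖) * ‖x - y‖ ^ 2 := by
  set h := x - y with hh
  set C := ρ * (‖y - xt‖ + ‖h‖) * ‖h‖ ^ 2 with hC
  set Q : ℝ := ⟪hess f xt h, h⟫ with hQ
  have conthess : Continuous (hess f) := cont_of_lip hlip
  have contline : Continuous fun t : ℝ => y + t • h :=
    continuous_const.add (continuous_id.smul continuous_const)
  have contg : Continuous (gradient f) := by
    have : ∀ z, DifferentiableAt ℝ (gradient f) z := hdg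
    exact Differentiable.continuous hdg
  have contΨ : Continuous fun t : ℝ => ⟪gradient f (y + t • h), h⟫ :=
    (contg.comp contline).inner continuous_const
  have contH : Continuous fun s : ℝ => ⟪hess f (y + s • h) h, h⟫ :=
    ((conthess.comp contline).clm_apply continuous_const).inner continuous_const
  -- inner bound
  have hinner : ∀ s : ℝ, s ∈ Set.Icc (0:ℝ) 1 → |⟪hess f (y + s • h) h, h⟫ - Q| ≤ C := by
    intro s hs
    have e1 : ⟪hess f (y + s • h) h, h⟫ - Q = ⟪(hess f (y + s • h) - hess f xt) h, h⟫ := by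
      rw [ContinuousLinearMap.sub_apply, inner_sub_left]
    rw [e1]
    have e2 : |⟪(hess f (y + s • h) - hess f xt) h, h⟫| ≤ ‖(hess f (y + s • h) - hess f xt) h‖ * ‖h‖ :=
      abs_real_inner_le_norm _ _
    have e3 : ‖(hess f (y + s • h) - hess f xt) h‖ ≤ ‖hess f (y + s • h) - hess f xt‖ * ‖h‖ :=
      ContinuousLinearMap.le_opNorm _ _
    have e4 : ‖hess f (y + s • h) - hess f xt‖ ≤ ρ * ‖y + s • h - xt‖ := hlip _ _
    have e5 : ‖y + s • h - xt‖ ≤ ‖y - xt‖ + ‖h‖ := by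
      have : y + s • h - xt = (y - xt) + s • h := by abel
      rw [this]
      refine le_trans (norm_add_le _ _) ?_
      have : ‖s • h‖ = |s| * ‖h‖ := by rw [norm_smul]; rfl
      rw [this]
      have : |s| ≤ 1 := by rw [abs_of_nonneg hs.1]; exact hs.2
      nlinarith [norm_nonneg h]
    calc |⟪(hess f (y + s • h) - hess f xt) h, h⟫|
        ≤ ‖(hess f (y + s • h) - hess f xt) h‖ * ‖h‖ := e2
      _ ≤ (‖hess f (y + s • h) - hess f xt‖ * ‖h‖) * ‖h‖ :=
          mul_le_mul_of_nonneg_right e3 (norm_nonneg h)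
      _ ≤ ((ρ * ‖y + s • h - xt‖) * ‖h‖) * ‖h‖ := by
          have := mul_le_mul_of_nonneg_right (mul_le_mul_of_nonneg_right e4 (norm_nonneg h)) (norm_nonneg h)
          linarith
      _ ≤ ((ρ * (‖y - xt‖ + ‖h‖)) * ‖h‖) * ‖h‖ := by
          have h1 := mul_le_mul_of_nonneg_left e5 hρ
          nlinarith [norm_nonneg h]
      _ = C := by rw [hC]; ring
  -- Φ bound
  have hΦ : ∀ t : ℝ, t ∈ Set.Icc (0:ℝ) 1 →
      |⟪gradient f (y + t • h), h⟫ - ⟪gradient f y, h⟫ - t * Q| ≤ C * t := by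
    intro t ht
    have hftc : ∫ s in (0:ℝ)..t, (⟪hess f (y + s • h) h, h⟫ - Q)
        = (fun r : ℝ => ⟪gradient f (y + r • h), h⟫ - r * Q) t
          - (fun r : ℝ => ⟪gradient f (y + r • h), h⟫ - r * Q) 0 := by
      apply intervalIntegral.integral_eq_sub_of_hasDerivAt
      · intro s _
        exact (psi_hasDerivAt hdg y h s).sub (hasDerivAt_mul_const Q)
      · exact ((contH.sub continuous_const)).intervalIntegrable 0 t
    have hbnd : ∀ s ∈ Set.uIoc (0:ℝ) t, ‖⟪hess f (y + s • h) h, h⟫ - Q‖ ≤ C := by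
      intro s hs
      have hsub : Set.uIoc (0:ℝ) t ⊆ Set.Icc (0:ℝ) 1 := by
        rw [Set.uIoc_of_le ht.1]
        intro r hr
        exact ⟨le_of_lt hr.1, le_trans hr.2 ht.2⟩
      exact hinner s (hsub hs)
    have := intervalIntegral.norm_integral_le_of_norm_le_const hbnd
    rw [hftc] at this
    simp only [zero_smul, add_zero, zero_mul, sub_zero, mul_zero] at this
    rw [Real.norm_eq_abs] at this
    calc |⟪gradient f (y + t • h), h⟫ - ⟪gradient f y, h⟫ - t * Q|
        ≤ C * |t - 0| := by
          convert this using 2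
          · ring
          · rw [sub_zero]
      _ = C * t := by rw [sub_zero, abs_of_nonneg ht.1]
  -- outer part
  set Φ : ℝ → ℝ := fun t => ⟪gradient f (y + t • h), h⟫ - ⟪gradient f y, h⟫ - t * Q with hΦdef
  have contΦ : Continuous Φ := by
    apply Continuous.sub (contΨ.sub continuous_const)
    fun_prop
  have hftc2 : ∫ t in (0:ℝ)..1, ⟪gradient f (y + t • h), h⟫ = f x - f y := by
    have h0 : ∫ t in (0:ℝ)..1, ⟪gradient f (y + t • h), h⟫
        = (fun s : ℝ => f (y + s • h)) 1 - (fun s : ℝ => f (y + s • h)) 0 :=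
      intervalIntegral.integral_eq_sub_of_hasDerivAt (fun t _ => phi_hasDerivAt hdf y h t)
        (contΨ.intervalIntegrable 0 1)
    rw [h0]; simp [hh]
  have hint2 : ∫ t in (0:ℝ)..1, Φ t = (f x - f y) - ⟪gradient f y, h⟫ - Q / 2 := by
    have e1 : ∫ t in (0:ℝ)..1, Φ t
        = (∫ t in (0:ℝ)..1, ⟪gradient f (y + t • h), h⟫)
          - ∫ t in (0:ℝ)..1, (⟪gradient f y, h⟫ + t * Q) := by
      rw [← intervalIntegral.integral_sub (contΨ.intervalIntegrable 0 1)
        ((Continuous.intervalIntegrable (by fun_prop) 0 1 :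
          IntervalIntegrable (fun t : ℝ => ⟪gradient f y, h⟫ + t * Q) MeasureTheory.volume 0 1))]
      congr 1; funext t; simp [hΦdef]; ring
    rw [e1, hftc2]
    have e2 : ∫ t in (0:ℝ)..1, (⟪gradient f y, h⟫ + t * Q) = ⟪gradient f y, h⟫ + Q / 2 := by
      rw [intervalIntegral.integral_add intervalIntegrable_const
        ((Continuous.intervalIntegrable (by fun_prop) 0 1 :
          IntervalIntegrable (fun t : ℝ => t * Q) MeasureTheory.volume 0 1))]
      simp only [intervalIntegral.integral_const, smul_eq_mul]
      rw [intervalIntegral.integral_mul_const, integral_id]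
      ring
    rw [e2]; ring
  have habs : |∫ t in (0:ℝ)..1, Φ t| ≤ C / 2 := by
    calc |∫ t in (0:ℝ)..1, Φ t| ≤ ∫ t in (0:ℝ)..1, |Φ t| :=
          intervalIntegral.abs_integral_le_integral_abs zero_le_one
      _ ≤ ∫ t in (0:ℝ)..1, C * t := by
          apply intervalIntegral.integral_mono_on zero_le_one
            (contΦ.abs.intervalIntegrable 0 1)
            ((Continuous.intervalIntegrable (by fun_prop) 0 1 :
              IntervalIntegrable (fun t : ℝ => C * t) MeasureTheory.volume 0 1))
          exact hΦ
      _ = C / 2 := by rw [intervalIntegral.integral_const_mul, integral_id]; ring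
  have hQcomm : (⟪h, hess f xt h⟫ : ℝ) = Q := real_inner_comm _ _
  have hgoal : f x - ftilde f xt y x = ∫ t in (0:ℝ)..1, Φ t := by
    rw [hint2, ftilde, ← hh, hQcomm]; ring
  rw [hgoal]
  calc |∫ t in (0:ℝ)..1, Φ t| ≤ C / 2 := habs
    _ = ρ / 2 * (‖y - xt‖ + ‖x - y‖) * ‖x - y‖ ^ 2 := by rw [hC, ← hh]; ring
end taylor3

lemma resid_mono {d : ℕ} (lam : ℝ) (hlam : 0 ≤ lam) (x g : EuclideanSpace ℝ (Fin d))
    {c₁ c₂ : ℝ} (h1 : 0 < c₁) (h12 : c₁ ≤ c₂) :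
    ‖x - soft (c₁ * lam) (x - c₁ • g)‖ ≤ ‖x - soft (c₂ * lam) (x - c₂ • g)‖ := by
  rw [EuclideanSpace.norm_eq, EuclideanSpace.norm_eq]
  apply Real.sqrt_le_sqrt
  apply Finset.sum_le_sum
  intro i _
  simp only [PiLp.sub_apply, PiLp.smul_apply, smul_eq_mul, Real.norm_eq_abs, soft_apply]
  have := resid_mono1d lam (x i) (g i) hlam h1 h12
  exact pow_le_pow_left₀ (abs_nonneg _) this 2

set_option maxHeartbeats 2000000 in
/-- If proximal gradient iterates started near a saddle point do not yet achieve sufficient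
decrease of the (quadratically approximated) objective, they remain in a ball of radius
`O(𝒮 ĉ)` around the saddle point. -/
theorem iterates_remain_bounded (chat : ℝ) (hchat : 3 ≤ chat) :
    ∃ cmax : ℝ, 0 < cmax ∧
      ∀ (d : ℕ) (f : EuclideanSpace ℝ (Fin d) → ℝ) (L ρ lam γ δ η κ 𝓕 𝓖 𝓢 𝓣 : ℝ)
        (xt : EuclideanSpace ℝ (Fin d)) (u : ℕ → EuclideanSpace ℝ (Fin d)),
        1 ≤ d → 0 < L → 0 < ρ → 0 ≤ lam → 0 < γ →
        Differentiable ℝ f → Differentiable ℝ (gradient f) →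
        (∀ x y : EuclideanSpace ℝ (Fin d), ‖gradient f x - gradient f y‖ ≤ L * ‖x - y‖) →
        (∀ x y : EuclideanSpace ℝ (Fin d), ‖hess f x - hess f y‖ ≤ ρ * ‖x - y‖) →
        κ = L / γ → 0 < δ → δ ≤ d * κ / Real.exp 1 →
        𝓕 = η * L * (γ ^ 3 / ρ ^ 2) / Real.log (d * κ / δ) ^ 3 →
        𝓖 = Real.sqrt (η * L) * (γ ^ 2 / ρ) / Real.log (d * κ / δ) ^ 2 →
        𝓢 = Real.sqrt (η * L) * (γ / ρ) / Real.log (d * κ / δ) →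
        𝓣 = Real.log (d * κ / δ) / (η * γ) →
        ‖L • (xt - soft (lam / L) (xt - (1 / L) • gradient f xt))‖ ≤ 𝓖 →
        (∃ v : EuclideanSpace ℝ (Fin d), ‖v‖ = 1 ∧ ⟪v, hess f xt v⟫ ≤ -γ) →
        ‖u 0 - xt‖ ≤ 2 * 𝓢 / (κ * Real.log (d * κ / δ)) →
        (∀ t, u (t + 1) = soft (η * lam) (u t - η • gradient f (u t))) →
        0 < η → η ≤ cmax / L →
        ∀ t : ℕ, (t : ℝ) < chat * 𝓣 →
          (∀ s ≤ t,
            ¬(ftilde f xt (u 0) (u s) - f (u 0) + lam * l1 (u s) - lam * l1 (u 0) ≤ -3 * 𝓕)) →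
          ‖u t - xt‖ ≤ 100 * (𝓢 * chat) := by
  have hchat0 : (0:ℝ) < chat := by linarith
  have hKpos : (0:ℝ) < 130000 * chat ^ 2 := by positivity
  refine ⟨((130000 * chat ^ 2)⁻¹) ^ 2, by positivity, ?_⟩
  intro d f L ρ lam γ δ η κ 𝓕 𝓖 𝓢 𝓣 xt u hd hL hρ hlam hγ hdf hdg hglip hhlip hκ hδ hδe
    h𝓕 h𝓖 h𝓢 h𝓣 hres hev hu0 hrec hη hηc t ht hnd
  set r := Real.log (d * κ / δ) with hr
  -- basic facts
  have hκpos : 0 < κ := by rw [hκ]; positivity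
  have hd1 : (1:ℝ) ≤ (d:ℝ) := by exact_mod_cast hd
  have hdκ : (0:ℝ) < (d:ℝ) * κ := by positivity
  have hedκδ : Real.exp 1 ≤ (d:ℝ) * κ / δ := by
    rw [le_div_iff₀ hδ]
    calc Real.exp 1 * δ ≤ Real.exp 1 * ((d:ℝ) * κ / Real.exp 1) := by
          apply mul_le_mul_of_nonneg_left hδe (Real.exp_pos 1).le
      _ = (d:ℝ) * κ := by
          rw [mul_comm, div_mul_cancel₀ _ (Real.exp_pos 1).ne']
  have hr1 : (1:ℝ) ≤ r := by
    rw [hr]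
    calc (1:ℝ) = Real.log (Real.exp 1) := (Real.log_exp 1).symm
      _ ≤ Real.log ((d:ℝ) * κ / δ) := Real.log_le_log (Real.exp_pos 1) hedκδ
  have hrpos : (0:ℝ) < r := by linarith
  have hηL1 : η * L ≤ 1 := by
    have h1 : η * L ≤ ((130000 * chat ^ 2)⁻¹) ^ 2 := by
      have := mul_le_mul_of_nonneg_right hηc hL.le
      rwa [div_mul_cancel₀ _ hL.ne'] at this
    have h2 : ((130000 * chat ^ 2)⁻¹) ^ 2 ≤ 1 := by
      have : (1:ℝ) ≤ 130000 * chat ^ 2 := by nlinarith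
      have hinv : (130000 * chat ^ 2)⁻¹ ≤ 1 := by
        rw [inv_le_one_iff₀]; right; exact this
      nlinarith [inv_pos.mpr hKpos]
    linarith
  have hηLpos : 0 < η * L := by positivity
  have hsqrt : Real.sqrt (η * L) ≤ (130000 * chat ^ 2)⁻¹ := by
    have h1 : η * L ≤ ((130000 * chat ^ 2)⁻¹) ^ 2 := by
      have := mul_le_mul_of_nonneg_right hηc hL.le
      rwa [div_mul_cancel₀ _ hL.ne'] at this
    calc Real.sqrt (η * L) ≤ Real.sqrt (((130000 * chat ^ 2)⁻¹) ^ 2) := Real.sqrt_le_sqrt h1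
      _ = (130000 * chat ^ 2)⁻¹ := Real.sqrt_sq (by positivity)
  have hsqpos : 0 < Real.sqrt (η * L) := Real.sqrt_pos.mpr hηLpos
  have h𝓢pos : 0 < 𝓢 := by rw [h𝓢]; positivity
  have h𝓕pos : 0 < 𝓕 := by rw [h𝓕]; positivity
  -- γ ≤ L
  have hγL : γ ≤ L := by
    obtain ⟨v, hv1, hvH⟩ := hev
    have hlipg : LipschitzWith L.toNNReal (gradient f) := by
      apply LipschitzWith.of_dist_le_mul
      intro x y
      rw [dist_eq_norm, dist_eq_norm, Real.coe_toNNReal _ hL.le]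
      exact hglip x y
    have hHnorm : ‖hess f xt‖ ≤ L := by
      have := (hdg xt).hasFDerivAt.le_of_lipschitz hlipg
      rwa [Real.coe_toNNReal _ hL.le] at this
    have h1 : |⟪v, hess f xt v⟫| ≤ ‖v‖ * ‖hess f xt v‖ := abs_real_inner_le_norm _ _
    have h2 : ‖hess f xt v‖ ≤ ‖hess f xt‖ * ‖v‖ := ContinuousLinearMap.le_opNorm _ _
    rw [hv1, one_mul] at h1
    rw [hv1, mul_one] at h2
    have h3 := abs_le.mp h1
    linarith
  have hκ1 : (1:ℝ) ≤ κ := by rw [hκ]; rw [le_div_iff₀ hγ]; linarith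
  -- r0 ≤ 2𝓢
  have hr0 : ‖u 0 - xt‖ ≤ 2 * 𝓢 := by
    have hκr : (1:ℝ) ≤ κ * r := by nlinarith
    have h1 : 2 * 𝓢 / (κ * r) ≤ 2 * 𝓢 := by
      rw [div_le_iff₀ (by positivity)]
      nlinarith [h𝓢pos, hκr]
    calc ‖u 0 - xt‖ ≤ 2 * 𝓢 / (κ * r) := hu0
      _ ≤ 2 * 𝓢 := h1
  -- residual at step η is ≤ 𝓢
  have hρ0 : (0:ℝ) ≤ ρ := hρ.le
  have hres2 : ‖xt - soft (η * lam) (xt - η • gradient f xt)‖ ≤ 𝓢 := by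
    have hη1L : η ≤ 1 / L := by rw [le_div_iff₀ hL]; exact hηL1
    have hmono := resid_mono lam hlam xt (gradient f xt) hη hη1L
    have heq : (1 / L) * lam = lam / L := by ring
    rw [heq] at hmono
    have hL𝓖 : L * ‖xt - soft (lam / L) (xt - (1 / L) • gradient f xt)‖ ≤ 𝓖 := by
      have := hres
      rwa [norm_smul, Real.norm_eq_abs, abs_of_pos hL] at this
    have h𝓖𝓢 : 𝓖 ≤ L * 𝓢 := by
      rw [h𝓖, h𝓢]
      rw [div_le_iff₀ (by positivity : (0:ℝ) < r ^ 2)]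
      have e : L * (Real.sqrt (η * L) * (γ / ρ) / r) * r ^ 2
          = Real.sqrt (η * L) * (γ / ρ) * (L * r) := by
        field_simp
      rw [e]
      have hγLr : γ ≤ L * r := by nlinarith
      calc Real.sqrt (η * L) * (γ ^ 2 / ρ) = Real.sqrt (η * L) * (γ / ρ) * γ := by ring
        _ ≤ Real.sqrt (η * L) * (γ / ρ) * (L * r) := by
            apply mul_le_mul_of_nonneg_left hγLr (by positivity)
    calc ‖xt - soft (η * lam) (xt - η • gradient f xt)‖
        ≤ ‖xt - soft (lam / L) (xt - (1 / L) • gradient f xt)‖ := hmono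
      _ ≤ 𝓖 / L := by rw [le_div_iff₀ hL]; linarith [hL𝓖]
      _ ≤ 𝓢 := by rw [div_le_iff₀ hL]; linarith [h𝓖𝓢]
  -- objective
  set F : EuclideanSpace ℝ (Fin d) → ℝ := fun z => f z + lam * l1 z with hF
  -- one-step descent
  have hdesc : ∀ s : ℕ, ‖u (s+1) - u s‖ ^ 2 ≤ 2 * η * (F (u s) - F (u (s+1))) := by
    intro s
    set G := gradient f (u s) with hG
    have hprox := soft_prox (η * lam) (by positivity) (u s - η • G) (u s)
    rw [← hrec s] at hprox
    have hinner : ⟪u s - η • G - u (s+1), u s - u (s+1)⟫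
        = ‖u s - u (s+1)‖ ^ 2 - η * ⟪G, u s - u (s+1)⟫ := by
      have e : u s - η • G - u (s+1) = (u s - u (s+1)) - η • G := by abel
      rw [e, inner_sub_left, real_inner_smul_left, real_inner_self_eq_norm_sq]
    rw [hinner] at hprox
    have htay := taylor2 L hdf hglip (u s) (u (s+1))
    have hinner2 : ⟪G, u (s+1) - u s⟫ = -⟪G, u s - u (s+1)⟫ := by
      rw [← inner_neg_right]; congr 1; abel
    rw [hinner2] at htay
    have hnorm_rev : ‖u s - u (s+1)‖ = ‖u (s+1) - u s‖ := norm_sub_rev _ _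
    rw [hnorm_rev] at hprox
    have htay2 := mul_le_mul_of_nonneg_left htay hη.le
    have ha : (0:ℝ) ≤ ‖u (s+1) - u s‖ ^ 2 := sq_nonneg _
    have hLa : (η * L) * ‖u (s+1) - u s‖ ^ 2 ≤ 1 * ‖u (s+1) - u s‖ ^ 2 :=
      mul_le_mul_of_nonneg_right hηL1 ha
    simp only [hF]
    ring_nf at htay2 hprox hLa ⊢
    linarith [htay2, hprox, hLa]
  -- summed descent
  have hsum : ∀ m : ℕ, (∑ s ∈ Finset.range m, ‖u (s+1) - u s‖ ^ 2)
      ≤ 2 * η * (F (u 0) - F (u m)) := by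
    intro m
    induction m with
    | zero => simp
    | succ k ih =>
      rw [Finset.sum_range_succ]
      have := hdesc k
      linarith
  -- telescoping and Cauchy-Schwarz
  have hCS : ∀ m : ℕ, ‖u m - u 0‖ ^ 2 ≤ (m:ℝ) * ∑ s ∈ Finset.range m, ‖u (s+1) - u s‖ ^ 2 := by
    intro m
    have htel : ‖u m - u 0‖ ≤ ∑ s ∈ Finset.range m, ‖u (s+1) - u s‖ := by
      have e : u m - u 0 = ∑ s ∈ Finset.range m, (u (s+1) - u s) :=
        (Finset.sum_range_sub (fun i => u i) m).symm
      rw [e]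
      exact norm_sum_le _ _
    have hcs := sq_sum_le_card_mul_sum_sq (s := Finset.range m)
      (f := fun s => ‖u (s+1) - u s‖)
    rw [Finset.card_range] at hcs
    calc ‖u m - u 0‖ ^ 2 ≤ (∑ s ∈ Finset.range m, ‖u (s+1) - u s‖) ^ 2 := by
          apply pow_le_pow_left₀ (norm_nonneg _) htel
      _ ≤ (m:ℝ) * ∑ s ∈ Finset.range m, ‖u (s+1) - u s‖ ^ 2 := hcs
  -- energy upper bound from no-decrease hypothesis
  have hub : ∀ m : ℕ, m ≤ t → F (u 0) - F (u m)
      ≤ 3 * 𝓕 + ρ / 2 * (‖u 0 - xt‖ + ‖u m - u 0‖) * ‖u m - u 0‖ ^ 2 := by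
    intro m hm
    have hnd' := hnd m hm
    push_neg at hnd'
    have htay := taylor3 ρ hρ0 hdf hdg hhlip xt (u 0) (u m)
    have h1 := (abs_le.mp htay).1
    have e : ‖u m - u 0‖ = ‖u m - u 0‖ := rfl
    simp only [hF]
    have h2 : ρ / 2 * (‖u 0 - xt‖ + ‖u m - u 0‖) * ‖u m - u 0‖ ^ 2
        = ρ / 2 * (‖u 0 - xt‖ + ‖u m - u 0‖) * ‖u m - u 0‖ ^ 2 := rfl
    linarith [hnd', h1]
  -- algebraic identities
  have hsq2 : Real.sqrt (η * L) ^ 2 = η * L := Real.sq_sqrt hηLpos.le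
  have hid1 : r * 𝓕 = γ * 𝓢 ^ 2 := by
    rw [h𝓕, h𝓢, div_pow, mul_pow, hsq2, div_pow]
    field_simp
  have hid2 : r * ρ * 𝓢 ^ 3 = γ * Real.sqrt (η * L) * 𝓢 ^ 2 := by
    rw [h𝓢]
    field_simp
  -- time bound
  have hmT : ∀ m : ℕ, m ≤ t → (m:ℝ) * η * γ ≤ chat * r := by
    intro m hm
    have h1 : (m:ℝ) ≤ (t:ℝ) := by exact_mod_cast hm
    rw [h𝓣, mul_div_assoc'] at ht
    have h2 : (t:ℝ) * (η * γ) < chat * r := (lt_div_iff₀ (by positivity)).mp ht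
    have h3 : (m:ℝ) * (η * γ) ≤ (t:ℝ) * (η * γ) :=
      mul_le_mul_of_nonneg_right h1 (by positivity)
    calc (m:ℝ) * η * γ = (m:ℝ) * (η * γ) := by ring
      _ ≤ (t:ℝ) * (η * γ) := h3
      _ ≤ chat * r := h2.le
  -- main induction
  have hB : ∀ m : ℕ, m ≤ t → ‖u m - u 0‖ ≤ 10 * chat * 𝓢 := by
    intro m
    induction m with
    | zero =>
      intro _
      simp only [sub_self, norm_zero]
      positivity
    | succ k ih =>
      intro hk1
      have hk : k ≤ t := Nat.le_of_succ_le hk1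
      have hDk := ih hk
      -- a priori bound
      have hstep : ‖u (k+1) - xt‖ ≤ 2 * ‖u k - xt‖ + 𝓢 := by
        rw [hrec k]
        have h1 : ‖soft (η*lam) (u k - η • gradient f (u k)) - soft (η*lam) (xt - η • gradient f xt)‖
            ≤ ‖(u k - η • gradient f (u k)) - (xt - η • gradient f xt)‖ :=
          soft_lip (η*lam) (by positivity) _ _
        have h2 : ‖(u k - η • gradient f (u k)) - (xt - η • gradient f xt)‖
            ≤ ‖u k - xt‖ + (η * L) * ‖u k - xt‖ := by
          have e : (u k - η • gradient f (u k)) - (xt - η • gradient f xt)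
              = (u k - xt) - η • (gradient f (u k) - gradient f xt) := by
            rw [smul_sub]; abel
          rw [e]
          refine le_trans (norm_sub_le _ _) ?_
          have e2 : ‖η • (gradient f (u k) - gradient f xt)‖
              = η * ‖gradient f (u k) - gradient f xt‖ := by
            rw [norm_smul, Real.norm_eq_abs, abs_of_pos hη]
          rw [e2]
          have h3 := mul_le_mul_of_nonneg_left (hglip (u k) xt) hη.le
          calc ‖u k - xt‖ + η * ‖gradient f (u k) - gradient f xt‖
              ≤ ‖u k - xt‖ + η * (L * ‖u k - xt‖) := by linarith
            _ = ‖u k - xt‖ + (η * L) * ‖u k - xt‖ := by ring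
        have h3 : ‖soft (η*lam) (xt - η • gradient f xt) - xt‖ ≤ 𝓢 := by
          rw [norm_sub_rev]; exact hres2
        have htri : ‖soft (η*lam) (u k - η • gradient f (u k)) - xt‖
            ≤ ‖soft (η*lam) (u k - η • gradient f (u k)) - soft (η*lam) (xt - η • gradient f xt)‖
              + ‖soft (η*lam) (xt - η • gradient f xt) - xt‖ := by
          have e : soft (η*lam) (u k - η • gradient f (u k)) - xt
              = (soft (η*lam) (u k - η • gradient f (u k)) - soft (η*lam) (xt - η • gradient f xt))
                + (soft (η*lam) (xt - η • gradient f xt) - xt) := by abel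
          rw [e]; exact norm_add_le _ _
        have h4 : (η * L) * ‖u k - xt‖ ≤ 1 * ‖u k - xt‖ :=
          mul_le_mul_of_nonneg_right hηL1 (norm_nonneg _)
        calc ‖soft (η*lam) (u k - η • gradient f (u k)) - xt‖
            ≤ ‖(u k - η • gradient f (u k)) - (xt - η • gradient f xt)‖ + 𝓢 := by linarith
          _ ≤ (‖u k - xt‖ + (η * L) * ‖u k - xt‖) + 𝓢 := by linarith
          _ ≤ 2 * ‖u k - xt‖ + 𝓢 := by linarith
      have hxtk : ‖u k - xt‖ ≤ ‖u k - u 0‖ + ‖u 0 - xt‖ := by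
        have e : u k - xt = (u k - u 0) + (u 0 - xt) := by abel
        rw [e]; exact norm_add_le _ _
      have hcs : (0:ℝ) ≤ chat * 𝓢 := by positivity
      have h1cs : 𝓢 ≤ chat * 𝓢 := by
        have := mul_le_mul_of_nonneg_right (show (1:ℝ) ≤ chat by linarith) h𝓢pos.le
        rwa [one_mul] at this
      have hA : ‖u (k+1) - u 0‖ ≤ 50 * chat * 𝓢 := by
        have h5 : ‖u (k+1) - u 0‖ ≤ ‖u (k+1) - xt‖ + ‖u 0 - xt‖ := by
          have e : u (k+1) - u 0 = (u (k+1) - xt) + (xt - u 0) := by abel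
          rw [e]
          have := norm_add_le (u (k+1) - xt) (xt - u 0)
          rwa [norm_sub_rev xt (u 0)] at this
        linarith only [h5, hstep, hxtk, hDk, hr0, h1cs, hcs]
      -- refined bound
      set D := ‖u (k+1) - u 0‖ with hDdef
      have hq : D ^ 2 ≤ ((k:ℝ)+1) * (2 * η * (3 * 𝓕 + ρ/2 * (‖u 0 - xt‖ + D) * D ^ 2)) := by
        have c1 := hCS (k+1)
        have c2 := hsum (k+1)
        have c3 := hub (k+1) hk1
        have c4 : (0:ℝ) ≤ ((k:ℝ)+1) := by positivity
        have c5 : ((k+1:ℕ):ℝ) = (k:ℝ)+1 := by push_cast; ring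
        rw [c5] at c1
        calc D ^ 2 ≤ ((k:ℝ)+1) * ∑ s ∈ Finset.range (k+1), ‖u (s+1) - u s‖ ^ 2 := c1
          _ ≤ ((k:ℝ)+1) * (2 * η * (F (u 0) - F (u (k+1)))) :=
              mul_le_mul_of_nonneg_left c2 c4
          _ ≤ ((k:ℝ)+1) * (2 * η * (3 * 𝓕 + ρ/2 * (‖u 0 - xt‖ + D) * D ^ 2)) := by
              apply mul_le_mul_of_nonneg_left _ c4
              apply mul_le_mul_of_nonneg_left c3 (by positivity)
      have hm1 : ((k:ℝ)+1) * η * γ ≤ chat * r := by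
        have := hmT (k+1) hk1
        push_cast at this
        exact this
      -- term 1
      have t1 : ((k:ℝ)+1) * η * 𝓕 ≤ chat * 𝓢 ^ 2 := by
        have h5 := mul_le_mul_of_nonneg_right hm1 h𝓕pos.le
        have h7 : (((k:ℝ)+1) * η * 𝓕) * γ ≤ (chat * 𝓢 ^ 2) * γ := by
          calc (((k:ℝ)+1) * η * 𝓕) * γ = ((k:ℝ)+1) * η * γ * 𝓕 := by ring
            _ ≤ chat * r * 𝓕 := h5
            _ = (chat * 𝓢 ^ 2) * γ := by rw [mul_assoc, hid1]; ring
        exact le_of_mul_le_mul_right h7 hγ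
      -- term 2
      have hDpos : (0:ℝ) ≤ D := norm_nonneg _
      have t2 : ρ * (‖u 0 - xt‖ + D) * D ^ 2 ≤ ρ * (52 * chat * 𝓢) * (50 * chat * 𝓢) ^ 2 := by
        have b1 : ‖u 0 - xt‖ + D ≤ 52 * chat * 𝓢 := by
          linarith only [hr0, hA, h1cs]
        have b2 : D ^ 2 ≤ (50 * chat * 𝓢) ^ 2 := by
          apply pow_le_pow_left₀ hDpos hA
        have b3 : (0:ℝ) ≤ ‖u 0 - xt‖ + D := by positivity
        calc ρ * (‖u 0 - xt‖ + D) * D ^ 2 ≤ ρ * (52 * chat * 𝓢) * D ^ 2 := by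
              apply mul_le_mul_of_nonneg_right _ (sq_nonneg D)
              exact mul_le_mul_of_nonneg_left b1 hρ0
          _ ≤ ρ * (52 * chat * 𝓢) * (50 * chat * 𝓢) ^ 2 := by
              apply mul_le_mul_of_nonneg_left b2 (by positivity)
      have t3 : ((k:ℝ)+1) * η * (ρ * (‖u 0 - xt‖ + D) * D ^ 2) ≤ chat ^ 2 * 𝓢 ^ 2 := by
        have h8 : ((k:ℝ)+1) * η * (ρ * (‖u 0 - xt‖ + D) * D ^ 2) * γ
            ≤ (chat * r) * (ρ * (52 * chat * 𝓢) * (50 * chat * 𝓢) ^ 2) := by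
          have h9 : (0:ℝ) ≤ ρ * (‖u 0 - xt‖ + D) * D ^ 2 := by positivity
          calc ((k:ℝ)+1) * η * (ρ * (‖u 0 - xt‖ + D) * D ^ 2) * γ
              = (((k:ℝ)+1) * η * γ) * (ρ * (‖u 0 - xt‖ + D) * D ^ 2) := by ring
            _ ≤ (chat * r) * (ρ * (‖u 0 - xt‖ + D) * D ^ 2) :=
                mul_le_mul_of_nonneg_right hm1 h9
            _ ≤ (chat * r) * (ρ * (52 * chat * 𝓢) * (50 * chat * 𝓢) ^ 2) :=
                mul_le_mul_of_nonneg_left t2 (by positivity)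
        have h10 : (chat * r) * (ρ * (52 * chat * 𝓢) * (50 * chat * 𝓢) ^ 2)
            = 130000 * chat ^ 4 * (r * ρ * 𝓢 ^ 3) := by ring
        rw [h10, hid2] at h8
        have h11 : 130000 * chat ^ 4 * (γ * Real.sqrt (η * L) * 𝓢 ^ 2)
            ≤ (chat ^ 2 * 𝓢 ^ 2) * γ := by
          have h12 : 130000 * chat ^ 4 * Real.sqrt (η * L)
              ≤ 130000 * chat ^ 4 * (130000 * chat ^ 2)⁻¹ :=
            mul_le_mul_of_nonneg_left hsqrt (by positivity)
          have h13 : 130000 * chat ^ 4 * (130000 * chat ^ 2)⁻¹ = chat ^ 2 := by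
            field_simp
          rw [h13] at h12
          calc 130000 * chat ^ 4 * (γ * Real.sqrt (η * L) * 𝓢 ^ 2)
              = (130000 * chat ^ 4 * Real.sqrt (η * L)) * (γ * 𝓢 ^ 2) := by ring
            _ ≤ chat ^ 2 * (γ * 𝓢 ^ 2) := by
                apply mul_le_mul_of_nonneg_right h12 (by positivity)
            _ = (chat ^ 2 * 𝓢 ^ 2) * γ := by ring
        have h14 : ((k:ℝ)+1) * η * (ρ * (‖u 0 - xt‖ + D) * D ^ 2) * γ
            ≤ (chat ^ 2 * 𝓢 ^ 2) * γ := le_trans h8 h11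
        exact le_of_mul_le_mul_right h14 hγ
      -- combine
      have hcomb : D ^ 2 ≤ 6 * (chat * 𝓢 ^ 2) + chat ^ 2 * 𝓢 ^ 2 := by
        have e : ((k:ℝ)+1) * (2 * η * (3 * 𝓕 + ρ/2 * (‖u 0 - xt‖ + D) * D ^ 2))
            = 6 * (((k:ℝ)+1) * η * 𝓕) + ((k:ℝ)+1) * η * (ρ * (‖u 0 - xt‖ + D) * D ^ 2) := by
          ring
        rw [e] at hq
        linarith only [hq, t1, t3]
      have hD2 : D ^ 2 ≤ 3 * chat ^ 2 * 𝓢 ^ 2 := by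
        have h15 : 3 * (chat * 𝓢 ^ 2) ≤ chat * (chat * 𝓢 ^ 2) :=
          mul_le_mul_of_nonneg_right hchat (by positivity)
        linarith only [hcomb, h15]
      by_contra hcon
      push_neg at hcon
      have hpos10 : (0:ℝ) < 10 * chat * 𝓢 := by positivity
      have h16 : (10 * chat * 𝓢) ^ 2 < D ^ 2 :=
        pow_lt_pow_left₀ hcon hpos10.le two_ne_zero
      have h17 : (0:ℝ) < chat ^ 2 * 𝓢 ^ 2 := by positivity
      linarith only [h16, hD2, h17]
  -- conclusion
  have hBt := hB t le_rfl
  have htri : ‖u t - xt‖ ≤ ‖u t - u 0‖ + ‖u 0 - xt‖ := by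
    have e : u t - xt = (u t - u 0) + (u 0 - xt) := by abel
    rw [e]; exact norm_add_le _ _
  have hcs : (0:ℝ) ≤ chat * 𝓢 := by positivity
  have h1cs : 𝓢 ≤ chat * 𝓢 := by
    have := mul_le_mul_of_nonneg_right (show (1:ℝ) ≤ chat by linarith) h𝓢pos.le
    rwa [one_mul] at this
  have hfin : 10 * chat * 𝓢 + 2 * 𝓢 ≤ 100 * (𝓢 * chat) := by
    linarith only [h1cs, hcs]
  linarith only [htri, hBt, hr0, hfin]
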